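/- Fault detectability sufficient condition: with the error dynamics ε(t+1) = λ ε(t) + u(t) + φ(t) for t ≥ T₀ where |u(t)| ≤ ū(t), threshold ε̄(t+1) = λ ε̄(t) + ū(t), ε̄(T₀) ≥ |ε(T₀)|, and λ ∈ (0,1): if at some time t₁ > T₀ we have |Σ_{h=T₀}^{t₁−1} λ^{t₁−1−h} φ(h)| > 2 ε̄(t₁), then |ε(t₁)| > ε̄(t₁), i.e. the fault is detected. -/
import Mathlib


/-- Fault detectability sufficient condition: with error dynamics
`ε(t+1) = λ ε(t) + u(t) + φ(t)` for `t ≥ T₀`, `|u(t)| ≤ ū(t)`, threshold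
`ε̄(t+1) = λ ε̄(t) + ū(t)`, `ε̄(T₀) ≥ |ε(T₀)|`, `λ ∈ (0,1)`:
if `|Σ_{h=T₀}^{t₁-1} λ^(t₁-1-h) φ(h)| > 2 ε̄(t₁)` at some `t₁ > T₀`, then
`|ε(t₁)| > ε̄(t₁)`, i.e. the fault is detected. -/
theorem fault_detectability
    (lam : ℝ) (hlam0 : 0 < lam) (hlam1 : lam < 1)
    (T₀ t₁ : ℕ) (ht₁ : T₀ < t₁)
    (ε εbar u ubar φ : ℕ → ℝ)
    (hu : ∀ t, |u t| ≤ ubar t)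
    (hε : ∀ t, T₀ ≤ t → ε (t + 1) = lam * ε t + u t + φ t)
    (hεbar : ∀ t, T₀ ≤ t → εbar (t + 1) = lam * εbar t + ubar t)
    (h0 : |ε T₀| ≤ εbar T₀)
    (hfault : |∑ h ∈ Finset.Ico T₀ t₁, lam ^ (t₁ - 1 - h) * φ h| > 2 * εbar t₁) :
    |ε t₁| > εbar t₁ := by
  set S : ℕ → ℝ := fun t => ∑ h ∈ Finset.Ico T₀ t, lam ^ (t - 1 - h) * φ h with hS
  have key : ∀ t, T₀ ≤ t → |ε t - S t| ≤ εbar t := by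
    intro t ht
    induction t, ht using Nat.le_induction with
    | base => simpa [hS] using h0
    | succ n hn ih =>
      have hSrec : S (n + 1) = lam * S n + φ n := by
        simp only [hS]
        rw [Finset.sum_Ico_succ_top hn, Finset.mul_sum]
        have h1 : n + 1 - 1 - n = 0 := by omega
        rw [h1, pow_zero, one_mul]
        congr 1
        apply Finset.sum_congr rfl
        intro h hh
        simp only [Finset.mem_Ico] at hh
        have h2 : n + 1 - 1 - h = (n - 1 - h) + 1 := by omega
        rw [h2, pow_succ]; ring
      have heq : ε (n + 1) - S (n + 1) = lam * (ε n - S n) + u n := by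
        rw [hSrec, hε n hn]; ring
      rw [heq, hεbar n hn]
      calc |lam * (ε n - S n) + u n| ≤ |lam * (ε n - S n)| + |u n| := abs_add_le _ _
        _ ≤ lam * εbar n + ubar n := by
            rw [abs_mul, abs_of_pos hlam0]
            exact add_le_add (mul_le_mul_of_nonneg_left ih hlam0.le) (hu n)
  have h1 := key t₁ ht₁.le
  have h2 : |S t₁| - |ε t₁| ≤ |S t₁ - ε t₁| := abs_sub_abs_le_abs_sub _ _
  rw [abs_sub_comm] at h2
  have h3 : |S t₁| > 2 * εbar t₁ := hfault
  linarith
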